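/- Let P be symmetric positive definite, X ∈ ℝ^{n×d} with X P Xᵀ invertible, and y ∈ ℝⁿ. For step size η with 0 < η < 1/λ_max(X P Xᵀ) and initialization w₀, the iterates w_{k+1} = w_k − η P Xᵀ (X w_k − y) satisfy w_k = w₀ + P Xᵀ K⁻¹ [I − (I − η K)^k](y − X w₀) where K = X P Xᵀ, and converge as k → ∞ to w₀ + P Xᵀ (X P Xᵀ)⁻¹ (y − X w₀). -/

import Mathlib

open Matrix Filter

theorem stmt_8 (n d : ℕ)
    (P : Matrix (Fin d) (Fin d) ℝ) (hP : P.PosDef)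
    (X : Matrix (Fin n) (Fin d) ℝ) (y : Fin n → ℝ)
    (hinv : Invertible (X * P * Xᵀ))
    (η : ℝ) (hη : 0 < η)
    (hspec : ∀ μ ∈ spectrum ℝ (X * P * Xᵀ), 0 < μ ∧ η * μ < 1)
    (w₀ : Fin d → ℝ) (w : ℕ → Fin d → ℝ)
    (hw0 : w 0 = w₀)
    (hrec : ∀ k, w (k + 1) = w k - η • (P *ᵥ (Xᵀ *ᵥ (X *ᵥ w k - y)))) :
    (∀ k, w k = w₀ + P *ᵥ (Xᵀ *ᵥ ((X * P * Xᵀ)⁻¹ *ᵥ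
        ((1 - (1 - η • (X * P * Xᵀ)) ^ k) *ᵥ (y - X *ᵥ w₀))))) ∧
    Tendsto w atTop
      (nhds (w₀ + P *ᵥ (Xᵀ *ᵥ ((X * P * Xᵀ)⁻¹ *ᵥ (y - X *ᵥ w₀))))) := by
  set K : Matrix (Fin n) (Fin n) ℝ := X * P * Xᵀ with hKdef
  set B : Matrix (Fin n) (Fin n) ℝ := 1 - η • K with hBdef
  set r : Fin n → ℝ := y - X *ᵥ w₀ with hrdef
  have hKK : K * K⁻¹ = 1 := mul_nonsing_inv _ (isUnit_det_of_invertible K)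
  have hK'K : K⁻¹ * K = 1 := nonsing_inv_mul _ (isUnit_det_of_invertible K)
  have hcomm : Commute K B :=
    (Commute.one_right K).sub_right ((Commute.refl K).smul_right η)
  -- key matrix identity
  have key : ∀ k : ℕ, K⁻¹ * (1 - B ^ (k + 1)) = K⁻¹ * (1 - B ^ k) + η • B ^ k := by
    intro k
    have h1 : B ^ (k + 1) = B ^ k - η • (B ^ k * K) := by
      rw [pow_succ, hBdef, mul_sub, mul_one, mul_smul_comm]
    have h2 : K⁻¹ * (B ^ k * K) = B ^ k := by
      rw [((hcomm.pow_right k).eq).symm, ← mul_assoc, hK'K, one_mul]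
    rw [h1]
    have h3 : (1 : Matrix (Fin n) (Fin n) ℝ) - (B ^ k - η • (B ^ k * K))
        = (1 - B ^ k) + η • (B ^ k * K) := by abel
    rw [h3, mul_add, mul_smul_comm, h2]
  -- closed form
  have closed : ∀ k, w k = w₀ + (P * Xᵀ * K⁻¹ * (1 - B ^ k)) *ᵥ r := by
    intro k
    induction k with
    | zero => simp [hw0]
    | succ k ih =>
      have hXM : X * (P * Xᵀ * K⁻¹ * (1 - B ^ k)) = 1 - B ^ k := by
        calc X * (P * Xᵀ * K⁻¹ * (1 - B ^ k))
            = (X * P * Xᵀ) * K⁻¹ * (1 - B ^ k) := by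
              simp only [Matrix.mul_assoc]
          _ = 1 - B ^ k := by rw [← hKdef, hKK, one_mul]
      have hXw : X *ᵥ w k - y = -(B ^ k *ᵥ r) := by
        rw [ih, mulVec_add, mulVec_mulVec, hXM, sub_mulVec, one_mulVec]
        have hXw0 : X *ᵥ w₀ - y = -r := by rw [hrdef]; abel
        calc X *ᵥ w₀ + (r - B ^ k *ᵥ r) - y
            = (X *ᵥ w₀ - y) + (r - B ^ k *ᵥ r) := by abel
          _ = -(B ^ k *ᵥ r) := by rw [hXw0]; abel
      have hM : P * Xᵀ * K⁻¹ * (1 - B ^ (k + 1))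
          = P * Xᵀ * K⁻¹ * (1 - B ^ k) + η • (P * Xᵀ * B ^ k) := by
        calc P * Xᵀ * K⁻¹ * (1 - B ^ (k + 1))
            = (P * Xᵀ) * (K⁻¹ * (1 - B ^ (k + 1))) := by rw [Matrix.mul_assoc]
          _ = (P * Xᵀ) * (K⁻¹ * (1 - B ^ k) + η • B ^ k) := by rw [key k]
          _ = P * Xᵀ * K⁻¹ * (1 - B ^ k) + η • (P * Xᵀ * B ^ k) := by
              rw [Matrix.mul_add, Matrix.mul_smul, ← Matrix.mul_assoc]
      rw [hrec k, hXw, ih, hM]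
      simp only [mulVec_neg, mulVec_mulVec, smul_neg, sub_neg_eq_add, add_mulVec,
        smul_mulVec, ← Matrix.mul_assoc]
      abel
  -- hermitian
  have hKherm : K.IsHermitian := by
    have hPt : Pᵀ = P := by
      rw [← conjTranspose_eq_transpose_of_trivial]; exact hP.isHermitian.eq
    show Kᴴ = K
    rw [conjTranspose_eq_transpose_of_trivial, hKdef, transpose_mul, transpose_mul,
      transpose_transpose, hPt, ← Matrix.mul_assoc]
  -- spectral decomposition
  set U : Matrix (Fin n) (Fin n) ℝ := (hKherm.eigenvectorUnitary : Matrix (Fin n) (Fin n) ℝ)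
    with hUdef
  set ev : Fin n → ℝ := hKherm.eigenvalues with hevdef
  have hU1 : U * star U = 1 := Matrix.mem_unitaryGroup_iff.mp hKherm.eigenvectorUnitary.2
  have hU2 : star U * U = 1 := Matrix.mem_unitaryGroup_iff'.mp hKherm.eigenvectorUnitary.2
  have hKeq : K = U * diagonal ev * star U := by
    have := hKherm.spectral_theorem
    simpa using this
  have hBeq : B = U * diagonal (fun i => 1 - η * ev i) * star U := by
    have hd : diagonal (fun i => 1 - η * ev i)
        = (1 : Matrix (Fin n) (Fin n) ℝ) - η • diagonal ev := by
      ext i j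
      by_cases h : i = j
      · subst h; simp [diagonal_apply_eq]
      · simp [diagonal_apply_ne _ h, one_apply_ne h]
    rw [hd, Matrix.mul_sub, Matrix.sub_mul, mul_one, hU1, hBdef, hKeq]
    congr 1
    rw [Matrix.mul_smul, Matrix.smul_mul]
  have hconj : ∀ (D : Matrix (Fin n) (Fin n) ℝ) (k : ℕ),
      (U * D * star U) ^ k = U * D ^ k * star U := by
    intro D k
    induction k with
    | zero => simp [hU1]
    | succ k ih =>
      rw [pow_succ, ih, pow_succ]
      calc U * D ^ k * star U * (U * D * star U)
          = U * D ^ k * (star U * U) * (D * star U) := by simp only [mul_assoc]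
        _ = U * D ^ k * (D * star U) := by rw [hU2, mul_one]
        _ = U * (D ^ k * D) * star U := by simp only [mul_assoc]
  have hBpow : ∀ k, B ^ k = U * diagonal (fun i => (1 - η * ev i) ^ k) * star U := by
    intro k
    rw [hBeq, hconj, diagonal_pow]
    rfl
  have habs : ∀ i, |1 - η * ev i| < 1 := by
    intro i
    obtain ⟨h1, h2⟩ := hspec (ev i) (hKherm.eigenvalues_mem_spectrum_real i)
    have h0 : 0 < η * ev i := mul_pos hη h1
    rw [abs_lt]
    constructor <;> linarith
  have hdiag : Tendsto (fun k => diagonal (fun i => (1 - η * ev i) ^ k))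
      atTop (nhds (0 : Matrix (Fin n) (Fin n) ℝ)) := by
    apply tendsto_pi_nhds.mpr
    intro i
    rw [tendsto_pi_nhds]
    intro j
    by_cases hij : i = j
    · subst hij
      simpa [diagonal_apply_eq] using
        tendsto_pow_atTop_nhds_zero_of_abs_lt_one (habs i)
    · simp [diagonal_apply_ne _ hij]
  have hBtend : Tendsto (fun k => B ^ k) atTop (nhds (0 : Matrix (Fin n) (Fin n) ℝ)) := by
    have h := ((hdiag.const_mul U).mul_const (star U))
    simp only [mul_zero, zero_mul] at h
    have heq : (fun k => U * diagonal (fun i => (1 - η * ev i) ^ k) * star U)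
        = fun k => B ^ k := by
      funext k; rw [hBpow]
    rwa [heq] at h
  refine ⟨?_, ?_⟩
  · intro k
    rw [closed k]
    simp only [mulVec_mulVec, Matrix.mul_assoc]
  · have hcont : Continuous fun M : Matrix (Fin n) (Fin n) ℝ =>
        w₀ + (P * Xᵀ * K⁻¹ * (1 - M)) *ᵥ r := by
      apply continuous_const.add
      exact (((continuous_const.matrix_mul (continuous_const.sub continuous_id))).matrix_mulVec
        continuous_const)
    have hlim := (hcont.tendsto 0).comp hBtend
    have heq : (fun M : Matrix (Fin n) (Fin n) ℝ =>
        w₀ + (P * Xᵀ * K⁻¹ * (1 - M)) *ᵥ r) ∘ (fun k => B ^ k) = w := by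
      funext k
      simp [Function.comp, ← closed k]
    rw [heq] at hlim
    simpa only [sub_zero, mul_one, mulVec_mulVec, Matrix.mul_assoc] using hlim
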